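/- Let (Ω, 𝓕, P) be a probability space and T a positive natural number. Let η₁, …, η_T : Ω → ℕ be i.i.d. integrable random variables each distributed as η, and set R_T = Σ_{t=1}^T η_t. Let m̄ : Ω → ℕ be an integrable random variable with m̄ ≤ R_T almost surely. Let (A_a)_{a∈ℕ} and (B_b)_{b∈ℕ} be two sequences of i.i.d. nonnegative integrable real random variables, each sequence independent of the pair (m̄, R_T), with E[A₁] ≤ D_max and E[B₁] ≤ D_max for a constant D_max ≥ 0. Then E[ Σ_{a=1}^{m̄} A_a + Σ_{b=m̄+1}^{R_T} B_b ] ≤ T · E[η] · D_max. Consequently, for any real m with m ≥ E[η] · D_max, this expectation is at most m · T. -/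

import Mathlib

open MeasureTheory ProbabilityTheory Finset
open scoped ENNReal NNReal

private lemma tsum_ite_Icc (lo hi : ℕ) (c : ℕ → ℝ≥0∞) :
    (∑' a : ℕ, if lo ≤ a ∧ a ≤ hi then c a else 0) = ∑ a ∈ Icc lo hi, c a := by
  rw [tsum_eq_sum (s := Icc lo hi) (fun b hb => if_neg (by simpa [Finset.mem_Icc] using hb))]
  exact Finset.sum_congr rfl fun a ha => if_pos (by simpa [Finset.mem_Icc] using ha)

/-- Lemma 1 (stability of the random instantaneous assignment policy), probabilistic content:
with `η₁, …, η_T` i.i.d. request counts, `R_T = ∑ₜ η_t`, effective fleet size `m̄ ≤ R_T`,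
and i.i.d. service distances `(A_a)` and `(B_b)` independent of `(m̄, R_T)` with means bounded
by `D_max`, the expected total service distance `E[∑_{a=1}^{m̄} A_a + ∑_{b=m̄+1}^{R_T} B_b]`
is at most `T · E[η] · D_max`; hence at most `m · T` whenever `m ≥ E[η] · D_max`. -/
theorem stmt_0 {Ω : Type*} [MeasurableSpace Ω] (P : Measure Ω) [IsProbabilityMeasure P]
    (T : ℕ) (hT : 0 < T)
    (η : Fin T → Ω → ℕ)
    (hη_meas : ∀ t, Measurable (η t))
    (hη_int : ∀ t, Integrable (fun ω => (η t ω : ℝ)) P)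
    (hη_indep : iIndepFun η P)
    (hη_ident : ∀ s t, IdentDistrib (η s) (η t) P P)
    (R : Ω → ℕ) (hR : ∀ ω, R ω = ∑ t, η t ω)
    (mbar : Ω → ℕ) (hmbar_meas : Measurable mbar)
    (hmbar_int : Integrable (fun ω => (mbar ω : ℝ)) P)
    (hmbar_le : ∀ᵐ ω ∂P, mbar ω ≤ R ω)
    (A B : ℕ → Ω → ℝ)
    (hA_meas : ∀ a, Measurable (A a)) (hB_meas : ∀ b, Measurable (B b))
    (hA_int : ∀ a, Integrable (A a) P) (hB_int : ∀ b, Integrable (B b) P)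
    (hA_nonneg : ∀ a ω, 0 ≤ A a ω) (hB_nonneg : ∀ b ω, 0 ≤ B b ω)
    (hA_indep : iIndepFun A P)
    (hB_indep : iIndepFun B P)
    (hA_ident : ∀ a a', IdentDistrib (A a) (A a') P P)
    (hB_ident : ∀ b b', IdentDistrib (B b) (B b') P P)
    (hA_indep_pair : IndepFun (fun ω => (mbar ω, R ω)) (fun ω a => A a ω) P)
    (hB_indep_pair : IndepFun (fun ω => (mbar ω, R ω)) (fun ω b => B b ω) P)
    (Dmax : ℝ) (hDmax : 0 ≤ Dmax)
    (hA_mean : ∫ ω, A 1 ω ∂P ≤ Dmax)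
    (hB_mean : ∫ ω, B 1 ω ∂P ≤ Dmax) :
    (∫ ω, ((∑ a ∈ Icc 1 (mbar ω), A a ω) + ∑ b ∈ Icc (mbar ω + 1) (R ω), B b ω) ∂P
        ≤ T * (∫ ω, (η ⟨0, hT⟩ ω : ℝ) ∂P) * Dmax)
    ∧ ∀ m : ℝ, (∫ ω, (η ⟨0, hT⟩ ω : ℝ) ∂P) * Dmax ≤ m →
        ∫ ω, ((∑ a ∈ Icc 1 (mbar ω), A a ω) + ∑ b ∈ Icc (mbar ω + 1) (R ω), B b ω) ∂P
          ≤ m * T := by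
  have hR_meas : Measurable R := by
    have h : R = fun ω => ∑ t, η t ω := funext hR
    rw [h]; exact Finset.measurable_sum _ fun t _ => hη_meas t
  have hp_meas : Measurable (fun ω => (mbar ω, R ω)) := hmbar_meas.prodMk hR_meas
  set Eη : ℝ := ∫ ω, (η ⟨0, hT⟩ ω : ℝ) ∂P with hEη
  have hEη_nonneg : 0 ≤ Eη := integral_nonneg fun ω => by positivity
  -- indicator families
  set I : ℕ → Ω → ℝ≥0∞ := fun a ω => if 1 ≤ a ∧ a ≤ mbar ω then 1 else 0 with hIdef
  set J : ℕ → Ω → ℝ≥0∞ := fun b ω => if mbar ω + 1 ≤ b ∧ b ≤ R ω then 1 else 0 with hJdef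
  have hI_meas : ∀ a, Measurable (I a) := fun a =>
    (measurable_of_countable
      (fun q : ℕ × ℕ => if 1 ≤ a ∧ a ≤ q.1 then (1 : ℝ≥0∞) else 0)).comp hp_meas
  have hJ_meas : ∀ b, Measurable (J b) := fun b =>
    (measurable_of_countable
      (fun q : ℕ × ℕ => if q.1 + 1 ≤ b ∧ b ≤ q.2 then (1 : ℝ≥0∞) else 0)).comp hp_meas
  have hA'_meas : ∀ a, Measurable fun ω => ENNReal.ofReal (A a ω) := fun a =>
    ENNReal.measurable_ofReal.comp (hA_meas a)
  have hB'_meas : ∀ b, Measurable fun ω => ENNReal.ofReal (B b ω) := fun b =>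
    ENNReal.measurable_ofReal.comp (hB_meas b)
  -- independence of indicators from the respective distances
  have hIndA : ∀ a, IndepFun (I a) (fun ω => ENNReal.ofReal (A a ω)) P := fun a =>
    hA_indep_pair.comp (φ := fun q : ℕ × ℕ => if 1 ≤ a ∧ a ≤ q.1 then (1 : ℝ≥0∞) else 0)
      (ψ := fun s : ℕ → ℝ => ENNReal.ofReal (s a)) (measurable_of_countable _)
      (ENNReal.measurable_ofReal.comp (measurable_pi_apply a))
  have hIndB : ∀ b, IndepFun (J b) (fun ω => ENNReal.ofReal (B b ω)) P := fun b =>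
    hB_indep_pair.comp (φ := fun q : ℕ × ℕ => if q.1 + 1 ≤ b ∧ b ≤ q.2 then (1 : ℝ≥0∞) else 0)
      (ψ := fun s : ℕ → ℝ => ENNReal.ofReal (s b)) (measurable_of_countable _)
      (ENNReal.measurable_ofReal.comp (measurable_pi_apply b))
  -- per-index bound for A
  have hA_term : ∀ a, ∫⁻ ω, I a ω * ENNReal.ofReal (A a ω) ∂P
      ≤ (∫⁻ ω, I a ω ∂P) * ENNReal.ofReal Dmax := by
    intro a
    rw [lintegral_mul_eq_lintegral_mul_lintegral_of_indepFun'' (hI_meas a).aemeasurable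
      (hA'_meas a).aemeasurable (hIndA a)]
    have h1 : ∫⁻ ω, ENNReal.ofReal (A a ω) ∂P = ENNReal.ofReal (∫ ω, A a ω ∂P) :=
      (ofReal_integral_eq_lintegral_ofReal (hA_int a) (ae_of_all _ (hA_nonneg a))).symm
    rw [h1, (hA_ident a 1).integral_eq]
    exact mul_le_mul_right (ENNReal.ofReal_le_ofReal hA_mean) _
  have hB_term : ∀ b, ∫⁻ ω, J b ω * ENNReal.ofReal (B b ω) ∂P
      ≤ (∫⁻ ω, J b ω ∂P) * ENNReal.ofReal Dmax := by
    intro b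
    rw [lintegral_mul_eq_lintegral_mul_lintegral_of_indepFun'' (hJ_meas b).aemeasurable
      (hB'_meas b).aemeasurable (hIndB b)]
    have h1 : ∫⁻ ω, ENNReal.ofReal (B b ω) ∂P = ENNReal.ofReal (∫ ω, B b ω ∂P) :=
      (ofReal_integral_eq_lintegral_ofReal (hB_int b) (ae_of_all _ (hB_nonneg b))).symm
    rw [h1, (hB_ident b 1).integral_eq]
    exact mul_le_mul_right (ENNReal.ofReal_le_ofReal hB_mean) _
  -- pointwise identities
  have hf_eq : ∀ ω, (∑' a, I a ω * ENNReal.ofReal (A a ω))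
      = ENNReal.ofReal (∑ a ∈ Icc 1 (mbar ω), A a ω) := by
    intro ω
    have h : ∀ a, I a ω * ENNReal.ofReal (A a ω)
        = (if 1 ≤ a ∧ a ≤ mbar ω then ENNReal.ofReal (A a ω) else 0) := by
      intro a; by_cases h : 1 ≤ a ∧ a ≤ mbar ω <;> simp [hIdef, h]
    rw [tsum_congr h, tsum_ite_Icc,
      ENNReal.ofReal_sum_of_nonneg (fun a _ => hA_nonneg a ω)]
  have hg_eq : ∀ ω, (∑' b, J b ω * ENNReal.ofReal (B b ω))
      = ENNReal.ofReal (∑ b ∈ Icc (mbar ω + 1) (R ω), B b ω) := by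
    intro ω
    have h : ∀ b, J b ω * ENNReal.ofReal (B b ω)
        = (if mbar ω + 1 ≤ b ∧ b ≤ R ω then ENNReal.ofReal (B b ω) else 0) := by
      intro b; by_cases h : mbar ω + 1 ≤ b ∧ b ≤ R ω <;> simp [hJdef, h] <;> intro hb <;> omega
    rw [tsum_congr h, tsum_ite_Icc,
      ENNReal.ofReal_sum_of_nonneg (fun b _ => hB_nonneg b ω)]
  have hsumI : ∀ ω, (∑' a, I a ω) = (mbar ω : ℝ≥0∞) := by
    intro ω
    rw [show (∑' a, I a ω) = ∑' a : ℕ, (if 1 ≤ a ∧ a ≤ mbar ω then (1:ℝ≥0∞) else 0) from rfl,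
      tsum_ite_Icc 1 (mbar ω) (fun _ => 1)]
    simp [Finset.sum_const, Nat.card_Icc]
  have hsumJ : ∀ ω, (∑' b, J b ω) = ((R ω - mbar ω : ℕ) : ℝ≥0∞) := by
    intro ω
    rw [show (∑' b, J b ω)
        = ∑' b : ℕ, (if mbar ω + 1 ≤ b ∧ b ≤ R ω then (1:ℝ≥0∞) else 0) from rfl,
      tsum_ite_Icc (mbar ω + 1) (R ω) (fun _ => 1)]
    simp [Finset.sum_const, Nat.card_Icc, Nat.succ_sub_succ_eq_sub]
  have hfgA_meas : ∀ a, Measurable fun ω => I a ω * ENNReal.ofReal (A a ω) :=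
    fun a => (hI_meas a).mul (hA'_meas a)
  have hfgB_meas : ∀ b, Measurable fun ω => J b ω * ENNReal.ofReal (B b ω) :=
    fun b => (hJ_meas b).mul (hB'_meas b)
  -- expected indicator sums
  have hL_I : ∑' a, ∫⁻ ω, I a ω ∂P = ∫⁻ ω, (mbar ω : ℝ≥0∞) ∂P := by
    rw [← lintegral_tsum (fun a => (hI_meas a).aemeasurable)]
    exact lintegral_congr hsumI
  have hL_J : ∑' b, ∫⁻ ω, J b ω ∂P = ∫⁻ ω, ((R ω - mbar ω : ℕ) : ℝ≥0∞) ∂P := by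
    rw [← lintegral_tsum (fun b => (hJ_meas b).aemeasurable)]
    exact lintegral_congr hsumJ
  -- bounds on the two pieces
  have LA : ∫⁻ ω, (∑' a, I a ω * ENNReal.ofReal (A a ω)) ∂P
      ≤ (∫⁻ ω, (mbar ω : ℝ≥0∞) ∂P) * ENNReal.ofReal Dmax := by
    rw [lintegral_tsum (fun a => (hfgA_meas a).aemeasurable)]
    calc (∑' a, ∫⁻ ω, I a ω * ENNReal.ofReal (A a ω) ∂P)
        ≤ ∑' a, (∫⁻ ω, I a ω ∂P) * ENNReal.ofReal Dmax := ENNReal.tsum_le_tsum hA_term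
      _ = (∑' a, ∫⁻ ω, I a ω ∂P) * ENNReal.ofReal Dmax := ENNReal.tsum_mul_right
      _ = _ := by rw [hL_I]
  have LB : ∫⁻ ω, (∑' b, J b ω * ENNReal.ofReal (B b ω)) ∂P
      ≤ (∫⁻ ω, ((R ω - mbar ω : ℕ) : ℝ≥0∞) ∂P) * ENNReal.ofReal Dmax := by
    rw [lintegral_tsum (fun b => (hfgB_meas b).aemeasurable)]
    calc (∑' b, ∫⁻ ω, J b ω * ENNReal.ofReal (B b ω) ∂P)
        ≤ ∑' b, (∫⁻ ω, J b ω ∂P) * ENNReal.ofReal Dmax := ENNReal.tsum_le_tsum hB_term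
      _ = (∑' b, ∫⁻ ω, J b ω ∂P) * ENNReal.ofReal Dmax := ENNReal.tsum_mul_right
      _ = _ := by rw [hL_J]
  -- E[m̄] + E[R - m̄] = E[R] = T * E[η]
  have hNatCast_meas : Measurable (fun n : ℕ => (n : ℝ≥0∞)) := measurable_of_countable _
  have hsum_R : (∫⁻ ω, (mbar ω : ℝ≥0∞) ∂P) + ∫⁻ ω, ((R ω - mbar ω : ℕ) : ℝ≥0∞) ∂P
      = ∫⁻ ω, (R ω : ℝ≥0∞) ∂P := by
    rw [← lintegral_add_left (show Measurable fun ω => ((mbar ω : ℝ≥0∞)) from hNatCast_meas.comp hmbar_meas)]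
    apply lintegral_congr_ae
    filter_upwards [hmbar_le] with ω h
    rw [← Nat.cast_add, Nat.add_sub_cancel' h]
  have hR_val : ∫⁻ ω, (R ω : ℝ≥0∞) ∂P = (T : ℝ≥0∞) * ENNReal.ofReal Eη := by
    have h1 : ∫⁻ ω, (R ω : ℝ≥0∞) ∂P = ∑ t, ∫⁻ ω, (η t ω : ℝ≥0∞) ∂P := by
      rw [← lintegral_finset_sum _ (fun t _ => show Measurable fun ω => ((η t ω : ℝ≥0∞)) from hNatCast_meas.comp (hη_meas t))]
      apply lintegral_congr fun ω => by rw [hR ω]; push_cast; rfl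
    have h2 : ∀ t, ∫⁻ ω, (η t ω : ℝ≥0∞) ∂P = ENNReal.ofReal Eη := by
      intro t
      have hc : (fun ω => (η t ω : ℝ≥0∞)) = fun ω => ENNReal.ofReal ((η t ω : ℝ)) := by
        funext ω; rw [ENNReal.ofReal_natCast]
      rw [hc, ← ofReal_integral_eq_lintegral_ofReal (hη_int t)
        (ae_of_all _ fun ω => by positivity)]
      congr 1
      exact ((hη_ident t ⟨0, hT⟩).comp (measurable_of_countable (fun n : ℕ => (n : ℝ)))).integral_eq
    rw [h1]
    simp [h2, Finset.sum_const, mul_comm]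
  -- measurability of the integrand
  set S : Ω → ℝ := fun ω =>
    (∑ a ∈ Icc 1 (mbar ω), A a ω) + ∑ b ∈ Icc (mbar ω + 1) (R ω), B b ω with hSdef
  have hS_nonneg : ∀ ω, 0 ≤ S ω := fun ω =>
    add_nonneg (Finset.sum_nonneg fun a _ => hA_nonneg a ω)
      (Finset.sum_nonneg fun b _ => hB_nonneg b ω)
  have hf_meas : Measurable fun ω => (∑ a ∈ Icc 1 (mbar ω), A a ω) := by
    have h1 : Measurable fun ω => (∑' a, I a ω * ENNReal.ofReal (A a ω)) :=
      Measurable.ennreal_tsum hfgA_meas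
    have h2 : (fun ω => (∑ a ∈ Icc 1 (mbar ω), A a ω))
        = fun ω => (∑' a, I a ω * ENNReal.ofReal (A a ω)).toReal := by
      funext ω
      rw [hf_eq ω, ENNReal.toReal_ofReal (Finset.sum_nonneg fun a _ => hA_nonneg a ω)]
    rw [h2]; exact h1.ennreal_toReal
  have hg_meas : Measurable fun ω => (∑ b ∈ Icc (mbar ω + 1) (R ω), B b ω) := by
    have h1 : Measurable fun ω => (∑' b, J b ω * ENNReal.ofReal (B b ω)) :=
      Measurable.ennreal_tsum hfgB_meas
    have h2 : (fun ω => (∑ b ∈ Icc (mbar ω + 1) (R ω), B b ω))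
        = fun ω => (∑' b, J b ω * ENNReal.ofReal (B b ω)).toReal := by
      funext ω
      rw [hg_eq ω, ENNReal.toReal_ofReal (Finset.sum_nonneg fun b _ => hB_nonneg b ω)]
    rw [h2]; exact h1.ennreal_toReal
  have hS_meas : Measurable S := hf_meas.add hg_meas
  -- the main lintegral bound
  have hmain : ∫⁻ ω, ENNReal.ofReal (S ω) ∂P ≤ ENNReal.ofReal (T * Eη * Dmax) := by
    have hsplit : ∫⁻ ω, ENNReal.ofReal (S ω) ∂P
        = (∫⁻ ω, (∑' a, I a ω * ENNReal.ofReal (A a ω)) ∂P)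
          + ∫⁻ ω, (∑' b, J b ω * ENNReal.ofReal (B b ω)) ∂P := by
      rw [← lintegral_add_left (Measurable.ennreal_tsum hfgA_meas)]
      apply lintegral_congr fun ω => ?_
      rw [hSdef, ENNReal.ofReal_add (Finset.sum_nonneg fun a _ => hA_nonneg a ω)
        (Finset.sum_nonneg fun b _ => hB_nonneg b ω), hf_eq ω, hg_eq ω]
    calc ∫⁻ ω, ENNReal.ofReal (S ω) ∂P
        ≤ (∫⁻ ω, (mbar ω : ℝ≥0∞) ∂P) * ENNReal.ofReal Dmax
          + (∫⁻ ω, ((R ω - mbar ω : ℕ) : ℝ≥0∞) ∂P) * ENNReal.ofReal Dmax := by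
          rw [hsplit]; exact add_le_add LA LB
      _ = ((∫⁻ ω, (mbar ω : ℝ≥0∞) ∂P) + ∫⁻ ω, ((R ω - mbar ω : ℕ) : ℝ≥0∞) ∂P)
            * ENNReal.ofReal Dmax := (add_mul _ _ _).symm
      _ = ((T : ℝ≥0∞) * ENNReal.ofReal Eη) * ENNReal.ofReal Dmax := by
          rw [hsum_R, hR_val]
      _ = ENNReal.ofReal (T * Eη * Dmax) := by
          rw [ENNReal.ofReal_mul (by positivity), ENNReal.ofReal_mul (by positivity),
            ENNReal.ofReal_natCast]
  have hmain' : ∫ ω, S ω ∂P ≤ T * Eη * Dmax := by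
    rw [integral_eq_lintegral_of_nonneg_ae (ae_of_all _ hS_nonneg)
      hS_meas.aestronglyMeasurable]
    calc (∫⁻ ω, ENNReal.ofReal (S ω) ∂P).toReal
        ≤ (ENNReal.ofReal (T * Eη * Dmax)).toReal :=
          ENNReal.toReal_mono ENNReal.ofReal_ne_top hmain
      _ = T * Eη * Dmax := ENNReal.toReal_ofReal (by positivity)
  refine ⟨hmain', fun m hm => hmain'.trans ?_⟩
  have hT' : (0 : ℝ) ≤ T := by positivity
  nlinarith [mul_le_mul_of_nonneg_right hm hT']
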